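/- The Werner–Holevo channel is self-complementary: for every 3×3 complex matrix ρ, the 3×3 matrix with entries C(ρ)_{ab} = Tr(K_a ρ K_b†), a,b ∈ {1,2,3}, where K_a = (1/√2)·J_a, equals Λ₁(ρ) = (1/2)(Tr(ρ)·I₃ − ρᵀ). -/
import Mathlib


open Matrix

/-- The spin-1 matrix `J₁ = -i[[0,0,0],[0,0,1],[0,-1,0]]`. -/
noncomputable def J1 : Matrix (Fin 3) (Fin 3) ℂ :=
  (-Complex.I) • !![0, 0, 0; 0, 0, 1; 0, -1, 0]

/-- The spin-1 matrix `J₂ = -i[[0,0,-1],[0,0,0],[1,0,0]]`. -/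
noncomputable def J2 : Matrix (Fin 3) (Fin 3) ℂ :=
  (-Complex.I) • !![0, 0, -1; 0, 0, 0; 1, 0, 0]

/-- The spin-1 matrix `J₃ = -i[[0,1,0],[-1,0,0],[0,0,0]]`. -/
noncomputable def J3 : Matrix (Fin 3) (Fin 3) ℂ :=
  (-Complex.I) • !![0, 1, 0; -1, 0, 0; 0, 0, 0]

/-- The Kraus operators `K_a = (1/√2)·J_a` of the Werner–Holevo channel. -/
noncomputable def K : Fin 3 → Matrix (Fin 3) (Fin 3) ℂ :=
  ![((1 / Real.sqrt 2 : ℝ) : ℂ) • J1,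
    ((1 / Real.sqrt 2 : ℝ) : ℂ) • J2,
    ((1 / Real.sqrt 2 : ℝ) : ℂ) • J3]

/-- The Werner–Holevo channel is self-complementary: the complementary channel
`C(ρ)_{ab} = Tr(K_a ρ K_b†)` equals `Λ₁(ρ) = (1/2)(Tr(ρ)·I₃ − ρᵀ)`. -/
theorem wernerHolevo_self_complementary (ρ : Matrix (Fin 3) (Fin 3) ℂ) :
    (Matrix.of fun a b : Fin 3 => (K a * ρ * (K b)ᴴ).trace) =
      (1 / 2 : ℂ) • (ρ.trace • (1 : Matrix (Fin 3) (Fin 3) ℂ) - ρᵀ) := by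
  set c : ℂ := ((1 / Real.sqrt 2 : ℝ) : ℂ) with hc
  have hcc : c * (starRingEnd ℂ) c = 1 / 2 := by
    rw [hc, Complex.conj_ofReal, ← Complex.ofReal_mul, div_mul_div_comm, one_mul,
      Real.mul_self_sqrt (by norm_num)]
    norm_num
  set J : Fin 3 → Matrix (Fin 3) (Fin 3) ℂ := ![J1, J2, J3] with hJ
  have hK : ∀ a, K a = c • J a := by
    intro a; fin_cases a <;> rfl
  ext a b
  have key : (K a * ρ * (K b)ᴴ).trace = (1 / 2 : ℂ) * (J a * ρ * (J b)ᴴ).trace := by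
    simp only [hK, conjTranspose_smul, Matrix.smul_mul, Matrix.mul_smul, smul_smul,
      trace_smul, smul_eq_mul, Complex.star_def]
    rw [mul_comm ((starRingEnd ℂ) c) c, hcc]
  rw [Matrix.of_apply, key]
  fin_cases a <;> fin_cases b <;>
    simp [hJ, J1, J2, J3, Matrix.trace_fin_three, Matrix.mul_apply,
        Fin.sum_univ_three, Matrix.conjTranspose_apply, Matrix.one_apply,
        Matrix.vecMul, dotProduct, Matrix.vecHead, Matrix.vecTail] <;>
    ring_nf <;>
    simp [Complex.I_sq] <;>
    ring_nf
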